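/- arXiv:1805.02311 — 4 statements merged into one kernel-verified Lean document; each statement's English description precedes it below -/
import Mathlib

section
/- Every occupational measure generated by a y₀-admissible T-periodic admissible pair belongs to W₁(y₀). That is, if u is a T-periodic control and y(t) = y(t, y₀, u) is a corresponding T-periodic solution of y' = f(y,u) with y(t) ∈ Y for all t, and γ is the occupational measure of (y(·),u(·)) on [0,T], then γ ∈ W and there exists a finite nonnegative measure ξ on Y×U with ∫(φ(y)−φ(y₀)) dγ = ∫∇φ(y)·f(y,u) dξ for all C¹ functions φ. -/
open MeasureTheory Filter Topology Set

set_option maxHeartbeats 1000000 in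
/-- Every occupational measure generated by a y₀-admissible T-periodic pair belongs to W₁(y₀). -/
theorem periodic_occupational_measure_mem_W1
    {m : ℕ} {U : Type} [MetricSpace U] [CompactSpace U] [MeasurableSpace U] [BorelSpace U]
    (Y : Set (EuclideanSpace ℝ (Fin m))) (hY : IsCompact Y)
    (f : EuclideanSpace ℝ (Fin m) → U → EuclideanSpace ℝ (Fin m))
    (hf : Continuous (fun p : EuclideanSpace ℝ (Fin m) × U => f p.1 p.2))
    (hfLip : ∃ L : NNReal, ∀ u : U, LipschitzWith L (fun y => f y u))
    (y0 : EuclideanSpace ℝ (Fin m)) (hy0 : y0 ∈ Y)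
    (T : ℝ) (hT : 0 < T)
    (u : ℝ → U) (hu : Measurable u) (huper : Function.Periodic u T)
    (y : ℝ → EuclideanSpace ℝ (Fin m))
    (hyper : Function.Periodic y T)
    (hyinit : y 0 = y0)
    (hode : ∀ t : ℝ, HasDerivAt y (f (y t) (u t)) t)
    (hYinv : ∀ t : ℝ, y t ∈ Y)
    (γ : Measure (EuclideanSpace ℝ (Fin m) × U))
    (hγprob : IsProbabilityMeasure γ)
    (hγocc : ∀ q : EuclideanSpace ℝ (Fin m) × U → ℝ, Continuous q →
      ∫ p, q p ∂γ = (1 / T) * ∫ t in (0:ℝ)..T, q (y t, u t)) :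
    -- γ ∈ W
    (∀ φ : EuclideanSpace ℝ (Fin m) → ℝ, ContDiff ℝ 1 φ →
      ∫ p, fderiv ℝ φ p.1 (f p.1 p.2) ∂γ = 0) ∧
    -- and γ admits a representing measure ξ, i.e. γ ∈ W₁(y₀)
    (∃ ξ : Measure (EuclideanSpace ℝ (Fin m) × U),
      IsFiniteMeasure ξ ∧
      ∀ φ : EuclideanSpace ℝ (Fin m) → ℝ, ContDiff ℝ 1 φ →
        ∫ p, (φ p.1 - φ y0) ∂γ = ∫ p, fderiv ℝ φ p.1 (f p.1 p.2) ∂ξ) := by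
  -- continuity and measurability of y and of the curve t ↦ (y t, u t)
  have hycont : Continuous y := by
    rw [continuous_iff_continuousAt]; exact fun t => (hode t).continuousAt
  have hymeas : Measurable y := hycont.measurable
  have hcurve : Measurable fun t : ℝ => (y t, u t) := hymeas.prodMk hu
  -- integrability of compositions with continuous functions
  have key : ∀ (a b : ℝ) (q : EuclideanSpace ℝ (Fin m) × U → ℝ), Continuous q →
      IntervalIntegrable (fun t => q (y t, u t)) volume a b := by
    intro a b q hq
    have hmeas : Measurable fun t => q (y t, u t) := hq.measurable.comp hcurve
    obtain ⟨C, hC⟩ := (hY.prod isCompact_univ).exists_bound_of_continuousOn hq.continuousOn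
    rw [intervalIntegrable_iff]
    haveI : IsFiniteMeasure (volume.restrict (Set.uIoc a b)) := by
      constructor
      rw [Measure.restrict_apply_univ]
      exact measure_Ioc_lt_top
    refine Integrable.mono' (integrable_const C) hmeas.aestronglyMeasurable ?_
    filter_upwards with t
    exact hC (y t, u t) ⟨hYinv t, trivial⟩
  -- the derivative of φ ∘ y
  have hderiv : ∀ (φ : EuclideanSpace ℝ (Fin m) → ℝ), ContDiff ℝ 1 φ → ∀ t : ℝ,
      HasDerivAt (fun s => φ (y s)) (fderiv ℝ φ (y t) (f (y t) (u t))) t := by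
    intro φ hφ t
    exact ((hφ.differentiable one_ne_zero) (y t)).hasFDerivAt.comp_hasDerivAt t (hode t)
  -- continuity of the integrand p ↦ Dφ(p₁)(f p)
  have hqc : ∀ (φ : EuclideanSpace ℝ (Fin m) → ℝ), ContDiff ℝ 1 φ →
      Continuous (fun p : EuclideanSpace ℝ (Fin m) × U => fderiv ℝ φ p.1 (f p.1 p.2)) := by
    intro φ hφ
    exact ((hφ.continuous_fderiv one_ne_zero).comp continuous_fst).clm_apply hf
  constructor
  · -- γ ∈ W
    intro φ hφ
    rw [hγocc _ (hqc φ hφ)]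
    have h0 : ∫ t in (0:ℝ)..T, fderiv ℝ φ (y t) (f (y t) (u t)) = φ (y T) - φ (y 0) :=
      intervalIntegral.integral_eq_sub_of_hasDerivAt (fun t _ => hderiv φ hφ t)
        (key 0 T _ (hqc φ hφ))
    have hyT : y T = y 0 := by simpa using hyper 0
    rw [h0, hyT]; ring
  · -- construct ξ
    set d : ℝ → NNReal := fun s => Real.toNNReal ((T - s) / T) with hd
    have hdcont : Continuous d :=
      continuous_real_toNNReal.comp ((continuous_const.sub continuous_id).div_const T)
    set μ : Measure ℝ :=
      (volume.restrict (Set.Ioc 0 T)).withDensity (fun s => (d s : ENNReal)) with hμ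
    have hμfin : IsFiniteMeasure μ := by
      constructor
      have h1 : μ Set.univ = ∫⁻ s in Set.Ioc 0 T, (d s : ENNReal) ∂volume := by
        rw [hμ, withDensity_apply _ MeasurableSet.univ, Measure.restrict_univ]
      rw [h1]
      calc ∫⁻ s in Set.Ioc 0 T, (d s : ENNReal) ∂volume
          ≤ ∫⁻ _ in Set.Ioc 0 T, 1 ∂volume := by
            refine setLIntegral_mono measurable_const (fun s hs => ?_)
            have h2 : (T - s) / T ≤ 1 := by
              rw [div_le_one hT]; linarith [hs.1]
            have h3 : d s ≤ 1 := by
              simpa [hd] using Real.toNNReal_le_one.mpr h2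
            exact_mod_cast h3
        _ = ENNReal.ofReal T := by simp [Real.volume_Ioc, hT.le]
        _ < ⊤ := ENNReal.ofReal_lt_top
    set ξ : Measure (EuclideanSpace ℝ (Fin m) × U) := μ.map (fun t => (y t, u t)) with hξ
    have hξfin : IsFiniteMeasure ξ := by
      constructor
      rw [hξ, Measure.map_apply hcurve MeasurableSet.univ]
      exact measure_lt_top μ _
    refine ⟨ξ, hξfin, fun φ hφ => ?_⟩
    set g : ℝ → ℝ := fun t => fderiv ℝ φ (y t) (f (y t) (u t)) with hg
    -- integral over ξ as a weighted time integral
    have hξint : ∫ p, fderiv ℝ φ p.1 (f p.1 p.2) ∂ξ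
        = ∫ s in Set.Ioc 0 T, ((T - s) / T) * g s := by
      rw [hξ, integral_map hcurve.aemeasurable (hqc φ hφ).aestronglyMeasurable, hμ,
        integral_withDensity_eq_integral_smul hdcont.measurable]
      refine setIntegral_congr_fun measurableSet_Ioc (fun s hs => ?_)
      have hnn : 0 ≤ (T - s) / T := div_nonneg (by linarith [hs.2]) hT.le
      simp [hd, NNReal.smul_def, Real.coe_toNNReal _ hnn, hg]
    -- LHS as a time integral
    have hLHS : ∫ p, (φ p.1 - φ y0) ∂γ = (1 / T) * ∫ t in (0:ℝ)..T, (φ (y t) - φ y0) :=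
      hγocc (fun p => φ p.1 - φ y0)
        (((hφ.continuous).comp continuous_fst).sub continuous_const)
    -- key identity: ∫₀ᵀ (φ(y t) - φ y₀) dt = ∫₀ᵀ (T - t) g t dt
    have hF : IntervalIntegrable (fun t => φ (y t) - φ y0) volume 0 T :=
      (((hφ.continuous).comp hycont).sub continuous_const).intervalIntegrable 0 T
    have hGint : IntervalIntegrable (fun t => (t - T) * g t) volume 0 T := by
      have h3 := key 0 T _ (hqc φ hφ)
      exact h3.continuousOn_mul ((continuous_id.sub continuous_const).continuousOn)
    have hHderiv : ∀ t : ℝ, HasDerivAt (fun s => (s - T) * (φ (y s) - φ y0))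
        ((φ (y t) - φ y0) + (t - T) * g t) t := by
      intro t
      have h1 : HasDerivAt (fun s : ℝ => s - T) 1 t := (hasDerivAt_id t).sub_const T
      have h2 : HasDerivAt (fun s => φ (y s) - φ y0) (g t) t :=
        (hderiv φ hφ t).sub_const (φ y0)
      have h3 := h1.mul h2
      simp only [one_mul] at h3
      exact h3
    have hsum : ∫ t in (0:ℝ)..T, ((φ (y t) - φ y0) + (t - T) * g t) = 0 := by
      rw [intervalIntegral.integral_eq_sub_of_hasDerivAt (fun t _ => hHderiv t) (hF.add hGint)]
      simp [hyinit]
    have hkey : ∫ t in (0:ℝ)..T, (φ (y t) - φ y0) = ∫ t in (0:ℝ)..T, (T - t) * g t := by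
      have hsplit := intervalIntegral.integral_add hF hGint
      rw [hsplit] at hsum
      have h4 : ∫ t in (0:ℝ)..T, (T - t) * g t = - ∫ t in (0:ℝ)..T, (t - T) * g t := by
        rw [← intervalIntegral.integral_neg]
        congr 1; funext t; ring
      rw [h4]; linarith
    -- put it together
    rw [hLHS, hξint, hkey]
    rw [← intervalIntegral.integral_of_le hT.le]
    rw [← intervalIntegral.integral_const_mul]
    congr 1; funext t; field_simp
end

section
/- Upper limit inclusion for occupational measures: assume the viability kernel condition 𝒰(y₀) ≠ ∅. If γ is a weak* limit of occupational measures γ_l ∈ Γ_{T_l}(y₀) with T_l → ∞, and each γ_l lies in W, then γ ∈ W₂(y₀); i.e., there exist finite nonnegative measures ξ_l on Y×U such that ∫(φ(y)−φ(y₀)) dγ = lim_{l→∞} ∫∇φ(y)·f(y,u) dξ_l for all φ ∈ C¹. -/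
open MeasureTheory Filter Topology Set

/-- Upper limit inclusion: any weak* limit of occupational measures γ_l ∈ Γ_{T_l}(y₀)
with T_l → ∞, each lying in W, belongs to W₂(y₀). -/
theorem limsup_occupational_measures_subset_W2
    {m : ℕ} {U : Type} [MetricSpace U] [CompactSpace U] [MeasurableSpace U] [BorelSpace U]
    (Y : Set (EuclideanSpace ℝ (Fin m))) (hY : IsCompact Y)
    (f : EuclideanSpace ℝ (Fin m) → U → EuclideanSpace ℝ (Fin m))
    (hf : Continuous (fun p : EuclideanSpace ℝ (Fin m) × U => f p.1 p.2))
    (hfLip : ∃ L : NNReal, ∀ u : U, LipschitzWith L (fun y => f y u))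
    (y0 : EuclideanSpace ℝ (Fin m)) (hy0 : y0 ∈ Y)
    (T : ℕ → ℝ) (hTpos : ∀ l, 0 < T l) (hT : Tendsto T atTop atTop)
    (u : ℕ → ℝ → U) (hu : ∀ l, Measurable (u l))
    (y : ℕ → ℝ → EuclideanSpace ℝ (Fin m))
    (hyinit : ∀ l, y l 0 = y0)
    (hode : ∀ l, ∀ t ∈ Set.Icc 0 (T l), HasDerivAt (y l) (f (y l t) (u l t)) t)
    (hYinv : ∀ l, ∀ t ∈ Set.Icc 0 (T l), y l t ∈ Y)
    (γl : ℕ → Measure (EuclideanSpace ℝ (Fin m) × U))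
    (hγlprob : ∀ l, IsProbabilityMeasure (γl l))
    (hγlocc : ∀ l, ∀ q : EuclideanSpace ℝ (Fin m) × U → ℝ, Continuous q →
      ∫ p, q p ∂(γl l) = (1 / T l) * ∫ t in (0:ℝ)..(T l), q (y l t, u l t))
    -- each γ_l lies in W
    (hγlW : ∀ l, (γl l) ((Y ×ˢ (univ : Set U))ᶜ) = 0 ∧
      ∀ φ : EuclideanSpace ℝ (Fin m) → ℝ, ContDiff ℝ 1 φ →
        ∫ p, fderiv ℝ φ p.1 (f p.1 p.2) ∂(γl l) = 0)
    (γ : Measure (EuclideanSpace ℝ (Fin m) × U)) (hγprob : IsProbabilityMeasure γ)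
    -- weak* convergence γ_l → γ
    (hconv : ∀ q : EuclideanSpace ℝ (Fin m) × U → ℝ, Continuous q →
      Tendsto (fun l => ∫ p, q p ∂(γl l)) atTop (𝓝 (∫ p, q p ∂γ))) :
    -- γ ∈ W₂(y₀):
    (γ ((Y ×ˢ (univ : Set U))ᶜ) = 0 ∧
      ∀ φ : EuclideanSpace ℝ (Fin m) → ℝ, ContDiff ℝ 1 φ →
        ∫ p, fderiv ℝ φ p.1 (f p.1 p.2) ∂γ = 0) ∧
    ∃ ξ : ℕ → Measure (EuclideanSpace ℝ (Fin m) × U),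
      (∀ l, IsFiniteMeasure (ξ l)) ∧
      ∀ φ : EuclideanSpace ℝ (Fin m) → ℝ, ContDiff ℝ 1 φ →
        Tendsto (fun l => ∫ p, fderiv ℝ φ p.1 (f p.1 p.2) ∂(ξ l)) atTop
          (𝓝 (∫ p, (φ p.1 - φ y0) ∂γ)) := by
  classical
  set K : Set (EuclideanSpace ℝ (Fin m) × U) := Y ×ˢ (univ : Set U) with hKdef
  have hKclosed : IsClosed K := (hY.isClosed).prod isClosed_univ
  have hKmeas : MeasurableSet K := hKclosed.measurableSet
  -- Part A : support of γ
  have partA1 : γ Kᶜ = 0 := by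
    set P : ℕ → ProbabilityMeasure (EuclideanSpace ℝ (Fin m) × U) := fun l => ⟨γl l, hγlprob l⟩ with hP
    set Q : ProbabilityMeasure (EuclideanSpace ℝ (Fin m) × U) := ⟨γ, hγprob⟩ with hQ
    have hPtend : Tendsto P atTop (𝓝 Q) := by
      rw [ProbabilityMeasure.tendsto_iff_forall_integral_tendsto]
      intro q
      exact hconv q q.continuous
    have hlim := ProbabilityMeasure.limsup_measure_closed_le_of_tendsto hPtend hKclosed
    have hPl : ∀ l, (γl l) K = 1 := by
      intro l
      exact (prob_compl_eq_zero_iff hKmeas).mp (hγlW l).1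
    have hlimsup : (atTop.limsup fun l => (P l : Measure (EuclideanSpace ℝ (Fin m) × U)) K) = 1 := by
      have heq : (fun l => (P l : Measure (EuclideanSpace ℝ (Fin m) × U)) K) = fun _ => (1 : ENNReal) := by
        funext l; exact hPl l
      rw [heq, limsup_const]
    rw [hlimsup] at hlim
    have h1 : γ K = 1 := le_antisymm prob_le_one hlim
    exact (prob_compl_eq_zero_iff hKmeas).mpr h1
  -- Part B : γ satisfies the W-condition
  have partB : ∀ φ : EuclideanSpace ℝ (Fin m) → ℝ, ContDiff ℝ 1 φ →
      ∫ p, fderiv ℝ φ p.1 (f p.1 p.2) ∂γ = 0 := by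
    intro φ hφ
    set q : EuclideanSpace ℝ (Fin m) × U → ℝ := fun p => fderiv ℝ φ p.1 (f p.1 p.2) with hq
    have hqcont : Continuous q :=
      ((hφ.continuous_fderiv one_ne_zero).comp continuous_fst).clm_apply hf
    have h1 := hconv q hqcont
    have h2 : (fun l => ∫ p, q p ∂(γl l)) = fun _ => (0 : ℝ) := by
      funext l; exact (hγlW l).2 φ hφ
    rw [h2] at h1
    exact (tendsto_nhds_unique tendsto_const_nhds h1).symm
  refine ⟨⟨partA1, partB⟩, ?_⟩
  -- Part C : construction of ξ
  have hTle : ∀ l, (0:ℝ) ≤ T l := fun l => (hTpos l).le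
  have hycont : ∀ l, ContinuousOn (y l) (Icc 0 (T l)) :=
    fun l t ht => (hode l t ht).continuousAt.continuousWithinAt
  set g : ℕ → ℝ → EuclideanSpace ℝ (Fin m) := fun l s => y l (projIcc (0:ℝ) (T l) (hTle l) s) with hgdef
  have hgcont : ∀ l, Continuous (g l) := by
    intro l
    exact (hycont l).comp_continuous
      (continuous_subtype_val.comp continuous_projIcc)
      (fun s => (projIcc (0:ℝ) (T l) (hTle l) s).2)
  have hgeq : ∀ l, ∀ s ∈ Icc (0:ℝ) (T l), g l s = y l s := by
    intro l s hs
    simp only [hgdef, projIcc_of_mem (hTle l) hs]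
  have hgY : ∀ l s, g l s ∈ Y := by
    intro l s
    exact hYinv l _ (projIcc (0:ℝ) (T l) (hTle l) s).2
  set F : ℕ → ℝ × ℝ → EuclideanSpace ℝ (Fin m) × U := fun l p => (g l p.2, u l p.2) with hFdef
  have hFmeas : ∀ l, Measurable (F l) := fun l =>
    ((hgcont l).measurable.comp measurable_snd).prodMk ((hu l).comp measurable_snd)
  set R : ℕ → Set (ℝ × ℝ) := fun l => {p : ℝ × ℝ | p.1 ∈ Icc (0:ℝ) (T l) ∧ p.2 ∈ Icc (0:ℝ) p.1}
    with hRdef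
  have hRmeas : ∀ l, MeasurableSet (R l) := by
    intro l
    refine MeasurableSet.inter ?_ (MeasurableSet.inter ?_ ?_)
    · exact measurable_fst measurableSet_Icc
    · exact measurableSet_le measurable_const measurable_snd
    · exact measurableSet_le measurable_snd measurable_fst
  have hRsub : ∀ l, R l ⊆ Icc (0:ℝ) (T l) ×ˢ Icc (0:ℝ) (T l) := by
    intro l p hp
    exact ⟨hp.1, hp.2.1, le_trans hp.2.2 hp.1.2⟩
  have hRfin : ∀ l, volume (R l) < ⊤ := by
    intro l
    refine lt_of_le_of_lt (measure_mono (hRsub l)) ?_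
    rw [Measure.volume_eq_prod, Measure.prod_prod]
    exact ENNReal.mul_lt_top (by simp) (by simp)
  set μ : ℕ → Measure (ℝ × ℝ) := fun l =>
    (ENNReal.ofReal (1 / T l)) • ((volume : Measure (ℝ × ℝ)).restrict (R l)) with hμdef
  have hμfin : ∀ l, IsFiniteMeasure (μ l) := by
    intro l
    constructor
    simp only [hμdef, Measure.smul_apply, Measure.restrict_apply MeasurableSet.univ, univ_inter,
      smul_eq_mul]
    exact ENNReal.mul_lt_top ENNReal.ofReal_lt_top (hRfin l)
  refine ⟨fun l => (μ l).map (F l), ?_, ?_⟩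
  · intro l
    haveI := hμfin l
    constructor
    rw [Measure.map_apply (hFmeas l) MeasurableSet.univ]
    exact measure_lt_top _ _
  · intro φ hφ
    set G : EuclideanSpace ℝ (Fin m) × U → ℝ := fun p => fderiv ℝ φ p.1 (f p.1 p.2) with hGdef
    have hGcont : Continuous G :=
      ((hφ.continuous_fderiv one_ne_zero).comp continuous_fst).clm_apply hf
    set q : EuclideanSpace ℝ (Fin m) × U → ℝ := fun p => φ p.1 - φ y0 with hqdef
    have hqcont : Continuous q := (hφ.continuous.comp continuous_fst).sub continuous_const
    have key : ∀ l, ∫ p, G p ∂((μ l).map (F l)) = ∫ p, q p ∂(γl l) := by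
      intro l
      have hTl := hTpos l
      set h : ℝ → ℝ := fun s => G (g l s, u l s) with hhdef
      have hhmeas : Measurable h :=
        hGcont.measurable.comp ((hgcont l).measurable.prodMk (hu l))
      obtain ⟨C, hC⟩ := (hY.prod isCompact_univ).exists_bound_of_continuousOn hGcont.continuousOn
      have hhbd : ∀ s, ‖h s‖ ≤ C := fun s => hC _ ⟨hgY l s, mem_univ _⟩
      -- step 1 : unfold the pushforward and the scalar multiple
      rw [MeasureTheory.integral_map (hFmeas l).aemeasurable hGcont.aestronglyMeasurable]
      simp only [hμdef, integral_smul_measure,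
        ENNReal.toReal_ofReal (by positivity : (0:ℝ) ≤ 1 / T l), smul_eq_mul]
      have hGF : (fun p : ℝ × ℝ => G (F l p)) = fun p : ℝ × ℝ => h p.2 := rfl
      rw [hGF]
      -- step 2 : Fubini on the triangular region
      have hint : IntegrableOn (fun p : ℝ × ℝ => h p.2) (R l) volume := by
        refine Integrable.mono' (g := fun _ : ℝ × ℝ => C)
          ((integrableOn_const_iff (C := C)).mpr (Or.inr (hRfin l)))
          ((hhmeas.comp measurable_snd).aestronglyMeasurable.restrict) ?_
        filter_upwards with p using hhbd _
      have e1 : (∫ p in R l, h p.2) = ∫ p, (R l).indicator (fun p : ℝ × ℝ => h p.2) p :=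
        (integral_indicator (hRmeas l)).symm
      have hint2 : Integrable ((R l).indicator fun p : ℝ × ℝ => h p.2)
          ((volume : Measure ℝ).prod volume) := by
        rw [← Measure.volume_eq_prod]
        exact (integrable_indicator_iff (hRmeas l)).mpr hint
      have e2 : (∫ p, (R l).indicator (fun p : ℝ × ℝ => h p.2) p)
          = ∫ t, ∫ s, (R l).indicator (fun p : ℝ × ℝ => h p.2) (t, s) := by
        rw [Measure.volume_eq_prod, MeasureTheory.integral_prod _ hint2]
      have e3 : ∀ t : ℝ, (∫ s, (R l).indicator (fun p : ℝ × ℝ => h p.2) (t, s))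
          = (Icc (0:ℝ) (T l)).indicator (fun t => ∫ s in Icc (0:ℝ) t, h s) t := by
        intro t
        by_cases hmem : t ∈ Icc (0:ℝ) (T l)
        · rw [indicator_of_mem hmem, ← integral_indicator measurableSet_Icc]
          congr 1
          funext s
          simp only [Set.indicator_apply, hRdef, mem_setOf_eq, hmem, true_and]
        · rw [indicator_of_notMem hmem]
          have hz : ∀ s : ℝ, (R l).indicator (fun p : ℝ × ℝ => h p.2) (t, s) = 0 := fun s =>
            indicator_of_notMem (fun hc => hmem hc.1) _
          simp only [hz, integral_zero]
      -- step 3 : fundamental theorem of calculus on each inner integral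
      have e4 : ∀ t ∈ Icc (0:ℝ) (T l), (∫ s in Icc (0:ℝ) t, h s) = φ (y l t) - φ y0 := by
        intro t ht
        have hD : ∀ s ∈ uIcc (0:ℝ) t, HasDerivAt (fun s => φ (y l s)) (h s) s := by
          intro s hs
          rw [uIcc_of_le ht.1] at hs
          have hsT : s ∈ Icc (0:ℝ) (T l) := ⟨hs.1, hs.2.trans ht.2⟩
          have hd := hode l s hsT
          have hφd := (hφ.differentiable one_ne_zero (y l s)).hasFDerivAt
          have hcomp := hφd.comp_hasDerivAt s hd
          convert hcomp using 1
          · rfl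
          · rfl
          · rfl
          · simp only [hhdef, hGdef, hgeq l s hsT]
        have hint3 : IntervalIntegrable h volume 0 t := by
          apply IntegrableOn.intervalIntegrable
          refine Integrable.mono' (g := fun _ : ℝ => C)
            ((integrableOn_const_iff (C := C)).mpr (Or.inr ?_))
            hhmeas.aestronglyMeasurable.restrict ?_
          · exact isCompact_uIcc.measure_lt_top
          · filter_upwards with s using hhbd s
        have hftc := intervalIntegral.integral_eq_sub_of_hasDerivAt hD hint3
        rw [MeasureTheory.integral_Icc_eq_integral_Ioc,
          ← intervalIntegral.integral_of_le ht.1, hftc, hyinit l]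
      -- step 4 : assemble
      have e5 : (∫ t, (Icc (0:ℝ) (T l)).indicator (fun t => ∫ s in Icc (0:ℝ) t, h s) t)
          = ∫ t in Icc (0:ℝ) (T l), (φ (y l t) - φ y0) := by
        rw [integral_indicator measurableSet_Icc]
        exact setIntegral_congr_fun measurableSet_Icc e4
      rw [e1, e2]
      simp only [e3]
      rw [e5, hγlocc l q hqcont]
      congr 1
      rw [intervalIntegral.integral_of_le (hTle l),
        ← MeasureTheory.integral_Icc_eq_integral_Ioc]
    have heq : (fun l => ∫ p, G p ∂((μ l).map (F l))) = fun l => ∫ p, q p ∂(γl l) := by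
      funext l; exact key l
    rw [heq]
    exact hconv q hqcont
end

section
/- Discounted limit inclusion: if γ_l ∈ W(λ_l, y₀) with λ_l → 0⁺ and γ_l → γ weak*, then γ ∈ W₂(y₀). In particular limsup_{λ→0} W(λ, y₀) ⊂ W₂(y₀). -/
open MeasureTheory Filter Topology Set

/-- Discounted limit inclusion: if γ_l ∈ W(λ_l, y₀), λ_l → 0⁺ and γ_l → γ weak*,
then γ ∈ W₂(y₀); in particular limsup_{λ→0} W(λ,y₀) ⊆ W₂(y₀). -/
theorem limsup_discounted_W_subset_W2
    {m : ℕ} {U : Type} [MetricSpace U] [CompactSpace U] [MeasurableSpace U] [BorelSpace U]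
    (Y : Set (EuclideanSpace ℝ (Fin m))) (hY : IsCompact Y)
    (f : EuclideanSpace ℝ (Fin m) → U → EuclideanSpace ℝ (Fin m))
    (hf : Continuous (fun p : EuclideanSpace ℝ (Fin m) × U => f p.1 p.2))
    (y0 : EuclideanSpace ℝ (Fin m)) (hy0 : y0 ∈ Y)
    (lam : ℕ → ℝ) (hlampos : ∀ l, 0 < lam l) (hlam : Tendsto lam atTop (𝓝 0))
    (γl : ℕ → Measure (EuclideanSpace ℝ (Fin m) × U))
    (hγlprob : ∀ l, IsProbabilityMeasure (γl l))
    (hγlsupp : ∀ l, (γl l) ((Y ×ˢ (univ : Set U))ᶜ) = 0)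
    -- γ_l ∈ W(λ_l, y₀)
    (hγlW : ∀ l, ∀ φ : EuclideanSpace ℝ (Fin m) → ℝ, ContDiff ℝ 1 φ →
      ∫ p, (fderiv ℝ φ p.1 (f p.1 p.2) + lam l * (φ y0 - φ p.1)) ∂(γl l) = 0)
    (γ : Measure (EuclideanSpace ℝ (Fin m) × U)) (hγprob : IsProbabilityMeasure γ)
    -- weak* convergence γ_l → γ
    (hconv : ∀ q : EuclideanSpace ℝ (Fin m) × U → ℝ, Continuous q →
      Tendsto (fun l => ∫ p, q p ∂(γl l)) atTop (𝓝 (∫ p, q p ∂γ)))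
    -- the limit lies in W (known, and may be assumed)
    (hγW : γ ((Y ×ˢ (univ : Set U))ᶜ) = 0 ∧
      ∀ φ : EuclideanSpace ℝ (Fin m) → ℝ, ContDiff ℝ 1 φ →
        ∫ p, fderiv ℝ φ p.1 (f p.1 p.2) ∂γ = 0) :
    -- γ ∈ W₂(y₀)
    ∃ ξ : ℕ → Measure (EuclideanSpace ℝ (Fin m) × U),
      (∀ l, IsFiniteMeasure (ξ l)) ∧
      ∀ φ : EuclideanSpace ℝ (Fin m) → ℝ, ContDiff ℝ 1 φ →
        Tendsto (fun l => ∫ p, fderiv ℝ φ p.1 (f p.1 p.2) ∂(ξ l)) atTop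
          (𝓝 (∫ p, (φ p.1 - φ y0) ∂γ)) := by
  classical
  refine ⟨fun l => (Real.toNNReal (lam l)⁻¹) • γl l, fun l => ?_, ?_⟩
  · have := hγlprob l
    infer_instance
  · intro φ hφ
    set K : Set (EuclideanSpace ℝ (Fin m) × U) := Y ×ˢ (univ : Set U) with hK
    have hKc : IsCompact K := hY.prod isCompact_univ
    have hφc : Continuous φ := hφ.continuous
    -- continuity of the integrand A
    have hA : Continuous (fun p : EuclideanSpace ℝ (Fin m) × U =>
        fderiv ℝ φ p.1 (f p.1 p.2)) := by
      have h1 : Continuous (fderiv ℝ φ) := (hφ.continuous_fderiv one_ne_zero)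
      exact isBoundedBilinearMap_apply.continuous.comp
        ((h1.comp continuous_fst).prodMk hf)
    have hB : Continuous (fun p : EuclideanSpace ℝ (Fin m) × U => φ y0 - φ p.1) :=
      continuous_const.sub (hφc.comp continuous_fst)
    -- bounds on K
    obtain ⟨C, hC⟩ := hKc.exists_bound_of_continuousOn hA.continuousOn
    obtain ⟨D, hD⟩ := hKc.exists_bound_of_continuousOn hB.continuousOn
    have key : ∀ l, ∫ p, fderiv ℝ φ p.1 (f p.1 p.2)
        ∂((Real.toNNReal (lam l)⁻¹) • γl l) = ∫ p, (φ p.1 - φ y0) ∂(γl l) := by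
      intro l
      have := hγlprob l
      have haeK : ∀ᵐ p ∂(γl l), p ∈ K := by
        rw [ae_iff]
        have : {p : EuclideanSpace ℝ (Fin m) × U | ¬ p ∈ K} = Kᶜ := rfl
        rw [this]
        exact hγlsupp l
      have hAint : Integrable (fun p : EuclideanSpace ℝ (Fin m) × U =>
          fderiv ℝ φ p.1 (f p.1 p.2)) (γl l) := by
        refine Integrable.mono' (integrable_const C) hA.aestronglyMeasurable ?_
        filter_upwards [haeK] with p hp using hC p hp
      have hBint : Integrable (fun p : EuclideanSpace ℝ (Fin m) × U =>
          φ y0 - φ p.1) (γl l) := by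
        refine Integrable.mono' (integrable_const D) hB.aestronglyMeasurable ?_
        filter_upwards [haeK] with p hp using hD p hp
      have h0 := hγlW l φ hφ
      have hsplit : ∫ p, (fderiv ℝ φ p.1 (f p.1 p.2) + lam l * (φ y0 - φ p.1)) ∂(γl l)
          = ∫ p, fderiv ℝ φ p.1 (f p.1 p.2) ∂(γl l)
            + lam l * ∫ p, (φ y0 - φ p.1) ∂(γl l) := by
        rw [integral_add hAint (hBint.const_mul (lam l)), integral_const_mul]
      rw [hsplit] at h0
      have hne : lam l ≠ 0 := (hlampos l).ne'
      have hAeq : ∫ p, fderiv ℝ φ p.1 (f p.1 p.2) ∂(γl l)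
          = lam l * ∫ p, (φ p.1 - φ y0) ∂(γl l) := by
        have : ∫ p, (φ p.1 - φ y0) ∂(γl l) = - ∫ p, (φ y0 - φ p.1) ∂(γl l) := by
          rw [← integral_neg]
          congr 1
          ext p
          ring
        rw [this]
        linarith
      rw [integral_smul_nnreal_measure, hAeq]
      have htr : (Real.toNNReal (lam l)⁻¹) = Real.toNNReal (lam l)⁻¹ := rfl
      have : ((Real.toNNReal (lam l)⁻¹ : NNReal) : ℝ) = (lam l)⁻¹ :=
        Real.coe_toNNReal _ (inv_nonneg.mpr (hlampos l).le)
      rw [NNReal.smul_def, this, smul_eq_mul]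
      field_simp
    simp only [key]
    exact hconv (fun p => φ p.1 - φ y0) ((hφc.comp continuous_fst).sub continuous_const)
end

section
/- Support localization: under Assumption III, if y₀ ∈ Y_z ∩ Y and γ ∈ W₂(y₀), then the support of γ is contained in Y_z × U; consequently W₂(y₀) ⊂ 𝒲(z) := {γ ∈ W : supp(γ) ⊂ Y_z × U}. -/
open MeasureTheory Filter Topology Set

set_option maxHeartbeats 1600000 in
/-- Support localization: under Assumption III, if y₀ ∈ Y_z ∩ Y and γ ∈ W₂(y₀), then
γ is supported in Y_z × U (hence W₂(y₀) ⊆ 𝒲(z)). -/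
theorem W2_support_in_level_set
    {m K : ℕ} {U : Type} [MetricSpace U] [CompactSpace U] [MeasurableSpace U] [BorelSpace U]
    (Y : Set (EuclideanSpace ℝ (Fin m))) (hY : IsCompact Y)
    (f : EuclideanSpace ℝ (Fin m) → U → EuclideanSpace ℝ (Fin m))
    (hf : Continuous (fun p : EuclideanSpace ℝ (Fin m) × U => f p.1 p.2))
    (F : Fin K → EuclideanSpace ℝ (Fin m) → ℝ)
    (hF : ∀ i, ContDiff ℝ 1 (F i))
    (hinv : ∀ i, ∀ y ∈ Y, ∀ u : U, fderiv ℝ (F i) y (f y u) = 0)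
    (z : Fin K → ℝ)
    (y0 : EuclideanSpace ℝ (Fin m)) (hy0 : y0 ∈ Y) (hy0z : ∀ i, F i y0 = z i)
    (γ : Measure (EuclideanSpace ℝ (Fin m) × U))
    (hγprob : IsProbabilityMeasure γ)
    (hγsupp : γ ((Y ×ˢ (univ : Set U))ᶜ) = 0)
    -- γ ∈ W
    (hγW : ∀ φ : EuclideanSpace ℝ (Fin m) → ℝ, ContDiff ℝ 1 φ →
      ∫ p, fderiv ℝ φ p.1 (f p.1 p.2) ∂γ = 0)
    -- γ ∈ W₂(y₀): approximating representing measures ξ_l ∈ ℳ₊(Y×U)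
    (ξ : ℕ → Measure (EuclideanSpace ℝ (Fin m) × U))
    (hξfin : ∀ l, IsFiniteMeasure (ξ l))
    (hξsupp : ∀ l, (ξ l) ((Y ×ˢ (univ : Set U))ᶜ) = 0)
    (hW2 : ∀ φ : EuclideanSpace ℝ (Fin m) → ℝ, ContDiff ℝ 1 φ →
      Tendsto (fun l => ∫ p, fderiv ℝ φ p.1 (f p.1 p.2) ∂(ξ l)) atTop
        (𝓝 (∫ p, (φ p.1 - φ y0) ∂γ))) :
    γ {p : EuclideanSpace ℝ (Fin m) × U | ¬ ∀ i, F i p.1 = z i} = 0 := by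
  classical
  set Ψ : EuclideanSpace ℝ (Fin m) → ℝ := fun y => ∑ i : Fin K, (F i y - z i)^2 with hΨdef
  -- derivative facts
  have hFd : ∀ i (y : EuclideanSpace ℝ (Fin m)), HasFDerivAt (F i) (fderiv ℝ (F i) y) y :=
    fun i y => ((hF i).differentiable one_ne_zero y).hasFDerivAt
  have h1 : ∀ (y : EuclideanSpace ℝ (Fin m)), HasFDerivAt Ψ
      (∑ i : Fin K, ((F i y - z i) • fderiv ℝ (F i) y + (F i y - z i) • fderiv ℝ (F i) y)) y := by
    intro y
    apply HasFDerivAt.fun_sum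
    intro i _
    have h := ((hFd i y).sub_const (z i))
    simpa [pow_two] using h.fun_mul h
  have hΨzero : ∀ y ∈ Y, ∀ u : U, fderiv ℝ Ψ y (f y u) = 0 := by
    intro y hy u
    rw [(h1 y).fderiv]
    simp [ContinuousLinearMap.sum_apply, hinv _ _ hy]
  have hΨcd : ContDiff ℝ 1 Ψ := by
    apply ContDiff.sum
    intro i _
    exact ((hF i).sub contDiff_const).pow 2
  -- each approximating integral vanishes
  have hint0 : ∀ l, ∫ p, fderiv ℝ Ψ p.1 (f p.1 p.2) ∂(ξ l) = 0 := by
    intro l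
    apply integral_eq_zero_of_ae
    have : (ξ l) {p : EuclideanSpace ℝ (Fin m) × U | ¬ fderiv ℝ Ψ p.1 (f p.1 p.2) = 0} = 0 := by
      apply measure_mono_null _ (hξsupp l)
      intro p hp
      simp only [mem_setOf_eq] at hp
      intro hmem
      rw [mem_prod] at hmem
      exact hp (hΨzero p.1 hmem.1 p.2)
    exact (ae_iff).2 this
  have hlim := hW2 Ψ hΨcd
  have hconst : Tendsto (fun l => ∫ p, fderiv ℝ Ψ p.1 (f p.1 p.2) ∂(ξ l)) atTop (𝓝 0) := by
    simp only [hint0]; exact tendsto_const_nhds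
  have heq0 : ∫ p, (Ψ p.1 - Ψ y0) ∂γ = 0 := tendsto_nhds_unique hlim hconst
  have hΨy0 : Ψ y0 = 0 := by
    simp [hΨdef, hy0z]
  have hint : ∫ p : EuclideanSpace ℝ (Fin m) × U, Ψ p.1 ∂γ = 0 := by
    simpa [hΨy0] using heq0
  -- integrability
  obtain ⟨ymax, hymax, hmax⟩ := hY.exists_isMaxOn ⟨y0, hy0⟩ (hΨcd.continuous.continuousOn)
  have hnneg : ∀ y : EuclideanSpace ℝ (Fin m), 0 ≤ Ψ y := fun y => Finset.sum_nonneg fun i _ => sq_nonneg _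
  have haeY : ∀ᵐ p ∂γ, p ∈ (Y ×ˢ (univ : Set U)) := by
    rw [ae_iff]
    exact measure_mono_null (fun p hp => hp) hγsupp
  have hintg : Integrable (fun p : EuclideanSpace ℝ (Fin m) × U => Ψ p.1) γ := by
    refine ⟨(hΨcd.continuous.comp continuous_fst).aestronglyMeasurable, ?_⟩
    apply HasFiniteIntegral.of_bounded (C := Ψ ymax)
    filter_upwards [haeY] with p hp
    rw [Real.norm_eq_abs, abs_of_nonneg (hnneg _)]
    exact hmax ((mem_prod.1 hp).1)
  have hae0 : (fun p : EuclideanSpace ℝ (Fin m) × U => Ψ p.1) =ᵐ[γ] 0 := by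
    have h := integral_eq_zero_iff_of_nonneg_ae
      (f := fun p : EuclideanSpace ℝ (Fin m) × U => Ψ p.1) (μ := γ)
      (Filter.Eventually.of_forall (fun p => hnneg p.1)) hintg
    exact h.1 hint
  have hset : γ {p : EuclideanSpace ℝ (Fin m) × U | ¬ Ψ p.1 = 0} = 0 := by
    have := ae_iff.1 hae0
    simpa using this
  apply measure_mono_null _ hset
  intro p hp
  simp only [mem_setOf_eq] at hp ⊢
  intro hΨ0
  apply hp
  intro i
  have hall := (Finset.sum_eq_zero_iff_of_nonneg (fun i _ => sq_nonneg (F i p.1 - z i))).1 hΨ0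
  have := hall i (Finset.mem_univ i)
  have := pow_eq_zero_iff (n := 2) (by norm_num) |>.1 this
  linarith [sub_eq_zero.1 this]
end
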